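/- Let W ⊆ K^E be a finite-dimensional subspace with #E < #S(K) (where S(K) = K ∪ {K}). Then the map Ψ_W sending a proper subspace L ⊆ K^s generated by a subfamily of {u^{(j)}}_{j∈E} to {i ∈ E : u^{(i)} ∉ L} is a bijection between such subspaces Lin(W) and the set T(W) of supports of elements of W. -/

import Mathlib

open Finset

/-- dot product on `Fin s → K` -/
def sdot {K : Type*} [Field K] {s : ℕ} (c x : Fin s → K) : K := ∑ k, c k * x k

lemma sdot_zero_left {K : Type*} [Field K] {s : ℕ} (x : Fin s → K) :
    sdot (0 : Fin s → K) x = 0 := by simp [sdot]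

lemma sdot_sum_smul {K : Type*} [Field K] {s n : ℕ} (y : Fin n → K)
    (v : Fin n → Fin s → K) (x : Fin s → K) :
    sdot (∑ k, y k • v k) x = ∑ k, y k * sdot (v k) x := by
  simp only [sdot, Finset.sum_apply, Pi.smul_apply, smul_eq_mul, Finset.sum_mul,
    Finset.mul_sum, mul_assoc]
  exact Finset.sum_comm

/-- the "kernel of dot with c" submodule -/
def sker {K : Type*} [Field K] {s : ℕ} (c : Fin s → K) : Submodule K (Fin s → K) where
  carrier := {x | sdot c x = 0}
  add_mem' := by
    intro x y hx hy
    have : sdot c (x + y) = sdot c x + sdot c y := by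
      simp [sdot, mul_add, Finset.sum_add_distrib]
    simp only [Set.mem_setOf_eq] at *
    rw [this, hx, hy, add_zero]
  zero_mem' := by simp [sdot]
  smul_mem' := by
    intro r x hx
    have : sdot c (r • x) = r * sdot c x := by
      simp [sdot, Finset.mul_sum, mul_left_comm]
    simp only [Set.mem_setOf_eq] at *
    rw [this, hx, mul_zero]

lemma mem_sker {K : Type*} [Field K] {s : ℕ} {c x : Fin s → K} :
    x ∈ sker c ↔ sdot c x = 0 := Iff.rfl

/-- the "perp" submodule of all c with sdot c x = 0 for all x ∈ L -/
def sperp {K : Type*} [Field K] {s : ℕ} (L : Submodule K (Fin s → K)) :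
    Submodule K (Fin s → K) where
  carrier := {c | ∀ x ∈ L, sdot c x = 0}
  add_mem' := by
    intro c d hc hd x hx
    have : sdot (c + d) x = sdot c x + sdot d x := by
      simp [sdot, add_mul, Finset.sum_add_distrib]
    rw [this, hc x hx, hd x hx, add_zero]
  zero_mem' := by intro x hx; simp [sdot]
  smul_mem' := by
    intro r c hc x hx
    have : sdot (r • c) x = r * sdot c x := by
      simp [sdot, Finset.mul_sum, mul_assoc]
    rw [this, hc x hx, mul_zero]

lemma mem_sperp {K : Type*} [Field K] {s : ℕ} {L : Submodule K (Fin s → K)}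
    {c : Fin s → K} : c ∈ sperp L ↔ ∀ x ∈ L, sdot c x = 0 := Iff.rfl

/-- annihilating functional existence -/
lemma exists_ann {K : Type u} [Field K] {s : ℕ} {L : Submodule K (Fin s → K)}
    {v : Fin s → K} (hv : v ∉ L) :
    ∃ c : Fin s → K, c ∈ sperp L ∧ sdot c v ≠ 0 := by
  rw [← Subspace.forall_mem_dualAnnihilator_apply_eq_zero_iff L v] at hv
  push_neg at hv
  obtain ⟨f, hfL, hfv⟩ := hv
  have hsingle : ∀ i : Fin s, (fun j => if i = j then (1 : K) else 0) = Pi.single i 1 := by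
    intro i; funext j; simp [Pi.single_apply, eq_comm]
  have hfx : ∀ x : Fin s → K, f x = sdot (fun k => f (Pi.single k 1)) x := by
    intro x
    conv_lhs => rw [pi_eq_sum_univ x]
    rw [map_sum]
    simp only [sdot, map_smul, smul_eq_mul, hsingle]
    exact Finset.sum_congr rfl fun k _ => mul_comm _ _
  refine ⟨fun k => f (Pi.single k 1), ?_, ?_⟩
  · intro x hx
    rw [← hfx]
    exact (Submodule.mem_dualAnnihilator f).mp hfL x hx
  · rw [← hfx]; exact hfv

/-- main combinatorial avoidance lemma -/
lemma avoid {K : Type u} [Field K] :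
    ∀ (m : ℕ) (ι : Type u) (a : ι → Fin (m + 1) → K),
      (∀ i, a i ≠ 0) → Cardinal.mk ι < Cardinal.mk K + 1 →
      ∃ x : Fin (m + 1) → K, x ≠ 0 ∧ ∀ i, sdot (a i) x ≠ 0 := by
  intro m
  induction m with
  | zero =>
    intro ι a ha _
    refine ⟨fun _ => 1, ?_, ?_⟩
    · intro h; simpa using congrFun h 0
    · intro i
      have h0 : a i 0 ≠ 0 := by
        intro h; apply ha i; funext k
        have hk : k = 0 := Fin.fin_one_eq_zero k
        rw [hk]; exact h
      simpa [sdot] using h0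
  | succ m ih =>
    intro ι a ha hcard
    set P : ι → Prop := fun i => ∀ k : Fin (m + 1), a i (Fin.castSucc k) = 0 with hP
    obtain ⟨h, hh0, hh⟩ := ih {i : ι // ¬ P i} (fun i k => a i.1 (Fin.castSucc k))
      (fun i hz => i.2 fun k => congrFun hz k)
      (lt_of_le_of_lt (Cardinal.mk_subtype_le _) hcard)
    have hsd : ∀ (i : ι) (t : K),
        sdot (a i) (Fin.snoc (t • h) 1) =
          t * sdot (fun k => a i (Fin.castSucc k)) h + a i (Fin.last (m + 1)) := by
      intro i t
      rw [sdot, Fin.sum_univ_castSucc]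
      simp only [Fin.snoc_castSucc, Fin.snoc_last, mul_one, Pi.smul_apply, smul_eq_mul]
      congr 1
      rw [sdot, Finset.mul_sum]
      exact Finset.sum_congr rfl fun k _ => by ring
    by_cases hex : ∃ i, P i
    · obtain ⟨i0, hi0⟩ := hex
      set bad : {i : ι // ¬ P i} → K :=
        fun i => - (a i.1 (Fin.last (m + 1))) / sdot (fun k => a i.1 (Fin.castSucc k)) h
        with hbad
      have hcard1 : Cardinal.mk {i : ι // ¬ P i} < Cardinal.mk K := by
        have hinj : Function.Injective
            (fun o : Option {i : ι // ¬ P i} => Option.elim o i0 Subtype.val) := by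
          intro o1 o2 heq
          match o1, o2 with
          | none, none => rfl
          | none, some j =>
            simp only [Option.elim] at heq
            exact absurd (heq ▸ hi0) j.2
          | some j, none =>
            simp only [Option.elim] at heq
            exact absurd (heq.symm ▸ hi0) j.2
          | some j1, some j2 =>
            simp only [Option.elim] at heq
            exact congrArg some (Subtype.ext heq)
        have hle : Cardinal.mk (Option {i : ι // ¬ P i}) ≤ Cardinal.mk ι :=
          Cardinal.mk_le_of_injective hinj
        rw [Cardinal.mk_option] at hle
        have h2 : Cardinal.mk {i : ι // ¬ P i} + 1 < Cardinal.mk K + 1 :=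
          lt_of_le_of_lt hle hcard
        by_contra hge
        push_neg at hge
        exact absurd (Cardinal.add_one_le_add_one_iff.mpr hge) (not_le.mpr h2)
      have hnsurj : ¬ Function.Surjective bad := fun hs =>
        absurd (Cardinal.mk_le_of_surjective hs) (not_le.mpr hcard1)
      simp only [Function.Surjective, not_forall] at hnsurj
      obtain ⟨t, ht⟩ := hnsurj
      push_neg at ht
      refine ⟨Fin.snoc (t • h) 1, ?_, ?_⟩
      · intro hz
        have := congrFun hz (Fin.last (m + 1))
        simp [Fin.snoc_last] at this
      · intro i
        rw [hsd i t]
        by_cases hi : P i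
        · have hlast : a i (Fin.last (m + 1)) ≠ 0 := by
            intro h0
            apply ha i
            funext k
            induction k using Fin.lastCases with
            | last => exact h0
            | cast k => exact hi k
          have hz : sdot (fun k => a i (Fin.castSucc k)) h = 0 := by simp [sdot, show ∀ k, a i (Fin.castSucc k) = 0 from hi]
          rw [hz, mul_zero, zero_add]
          exact hlast
        · have hS := hh ⟨i, hi⟩
          intro heq
          apply ht ⟨i, hi⟩
          rw [hbad]
          have : - a i (Fin.last (m + 1)) =
              t * sdot (fun k => a i (Fin.castSucc k)) h := by linear_combination - heq
          rw [div_eq_iff hS]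
          exact this
    · refine ⟨Fin.snoc h 0, ?_, ?_⟩
      · intro hz
        apply hh0
        funext k
        have := congrFun hz (Fin.castSucc k)
        simpa [Fin.snoc_castSucc] using this
      · intro i
        have hi : ¬ P i := fun hp => hex ⟨i, hp⟩
        have hval : sdot (a i) (Fin.snoc h 0) = sdot (fun k => a i (Fin.castSucc k)) h := by
          rw [sdot, Fin.sum_univ_castSucc]
          simp only [Fin.snoc_castSucc, Fin.snoc_last, mul_zero, add_zero, sdot]
        rw [hval]
        exact hh ⟨i, hi⟩

/-- key lemma: existence of a good functional for a proper subspace -/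
lemma key {K E : Type u} [Field K] {s : ℕ} (u : E → (Fin s → K))
    (hcard : Cardinal.mk E < Cardinal.mk K + 1)
    (L : Submodule K (Fin s → K)) (hL : L ≠ ⊤) :
    ∃ c : Fin s → K, c ≠ 0 ∧ (∀ x ∈ L, sdot c x = 0) ∧
      ∀ j, u j ∉ L → sdot c (u j) ≠ 0 := by
  obtain ⟨v, -, hv⟩ := SetLike.exists_of_lt ((lt_top_iff_ne_top (α := Submodule K (Fin s → K))).mpr hL)
  obtain ⟨c0, hc0L, hc0v⟩ := exists_ann hv
  have hc0 : c0 ≠ 0 := by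
    intro h; rw [h] at hc0v; exact hc0v (sdot_zero_left v)
  haveI : Nontrivial (sperp L) :=
    nontrivial_of_ne ⟨c0, hc0L⟩ 0 (fun h => hc0 (congrArg Subtype.val h))
  have hm : 0 < Module.finrank K (sperp L) := Module.finrank_pos
  obtain ⟨m', hm'⟩ : ∃ m', Module.finrank K (sperp L) = m' + 1 :=
    ⟨Module.finrank K (sperp L) - 1, (Nat.succ_pred_eq_of_pos hm).symm⟩
  let b : Module.Basis (Fin (m' + 1)) K (sperp L) := Module.finBasisOfFinrankEq K (sperp L) hm'
  set a : {j : E // u j ∉ L} → Fin (m' + 1) → K :=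
    fun j k => sdot ((b k : Fin s → K)) (u j.1) with haa
  have haz : ∀ j, a j ≠ 0 := by
    intro j hz
    obtain ⟨c1, hc1L, hc1⟩ := exists_ann j.2
    apply hc1
    have hrepr : (⟨c1, hc1L⟩ : sperp L) = ∑ k, b.repr ⟨c1, hc1L⟩ k • b k :=
      (b.sum_repr _).symm
    have hc1e : c1 = ∑ k, b.repr ⟨c1, hc1L⟩ k • ((b k : Fin s → K)) := by
      have := congrArg (Subtype.val) hrepr
      simpa only [Submodule.coe_sum, Submodule.coe_smul] using this
    rw [hc1e, sdot_sum_smul]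
    have hzk : ∀ k, sdot ((b k : Fin s → K)) (u j.1) = 0 := fun k => congrFun hz k
    simp [hzk]
  have hcard' : Cardinal.mk {j : E // u j ∉ L} < Cardinal.mk K + 1 :=
    lt_of_le_of_lt (Cardinal.mk_subtype_le _) hcard
  obtain ⟨y, hy0, hy⟩ := avoid m' {j : E // u j ∉ L} a haz hcard'
  refine ⟨∑ k, y k • ((b k : Fin s → K)), ?_, ?_, ?_⟩
  · intro h
    have hli : LinearIndependent K (fun k => ((b k : Fin s → K))) :=
      b.linearIndependent.map' (sperp L).subtype (Submodule.ker_subtype _)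
    exact hy0 (funext fun k => Fintype.linearIndependent_iff.mp hli y h k)
  · intro x hx
    have hmem : (∑ k, y k • ((b k : Fin s → K))) ∈ sperp L :=
      Submodule.sum_mem _ fun k _ => Submodule.smul_mem _ _ (b k).2
    exact hmem x hx
  · intro j hj
    rw [sdot_sum_smul]
    have := hy ⟨j, hj⟩
    rw [sdot] at this
    simpa [haa, mul_comm] using this

/-- if #E < #S(K) = #K + 1, the map Ψ_W : L ↦ {i ∈ E : u^{(i)} ∉ L}
is a bijection between Lin(W) (the proper subspaces of K^s generated by
subfamilies of {u^{(j)}}_{j∈E}) and the set T(W) of (nonempty) supports of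
nonzero elements of W = span{φ_1,…,φ_s}. -/
theorem stmt12 {K E : Type u} [Field K] {s : ℕ} (hs : 0 < s)
    (φ : Fin s → (E → K)) (hφ : LinearIndependent K φ)
    (u : E → (Fin s → K)) (hu : ∀ j i, u j i = φ i j)
    (hcard : Cardinal.mk E < Cardinal.mk K + 1) :
    Set.BijOn (fun L : Submodule K (Fin s → K) => {i : E | u i ∉ L})
      {L | L ≠ ⊤ ∧ ∃ X : Set E, L = Submodule.span K (u '' X)}
      {S | ∃ w ∈ Submodule.span K (Set.range φ), w ≠ 0 ∧ Function.support w = S} := by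
  have weval : ∀ (c : Fin s → K) (j : E), (∑ k, c k • φ k) j = sdot c (u j) := by
    intro c j
    simp [sdot, Finset.sum_apply, hu]
  refine ⟨?_, ?_, ?_⟩
  · -- MapsTo
    intro L hL
    obtain ⟨c, hc0, hcL, hcu⟩ := key u hcard L hL.1
    refine ⟨∑ k, c k • φ k, ?_, ?_, ?_⟩
    · exact Submodule.sum_mem _ fun k _ =>
        Submodule.smul_mem _ _ (Submodule.subset_span ⟨k, rfl⟩)
    · intro h
      exact hc0 (funext fun k => Fintype.linearIndependent_iff.mp hφ c h k)
    · ext j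
      simp only [Function.mem_support, weval c j, Set.mem_setOf_eq]
      constructor
      · intro hne hmem; exact hne (hcL (u j) hmem)
      · exact hcu j
  · -- InjOn
    intro L1 h1 L2 h2 heq
    obtain ⟨-, X1, hX1⟩ := h1
    obtain ⟨-, X2, hX2⟩ := h2
    have hspan : ∀ (L : Submodule K (Fin s → K)) (X : Set E),
        L = Submodule.span K (u '' X) →
        L = Submodule.span K (u '' {i | u i ∈ L}) := by
      intro L X hX
      apply le_antisymm
      · conv_lhs => rw [hX]
        apply Submodule.span_le.mpr
        rintro _ ⟨i, hi, rfl⟩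
        exact Submodule.subset_span
          ⟨i, show u i ∈ L from hX ▸ Submodule.subset_span ⟨i, hi, rfl⟩, rfl⟩
      · apply Submodule.span_le.mpr
        rintro _ ⟨i, hi, rfl⟩
        exact hi
    have hsets : {i : E | u i ∈ L1} = {i : E | u i ∈ L2} := by
      ext i
      have hi := Set.ext_iff.mp heq i
      simp only [Set.mem_setOf_eq] at hi ⊢
      exact not_iff_not.mp hi
    rw [hspan L1 X1 hX1, hspan L2 X2 hX2, hsets]
  · -- SurjOn
    intro S hS
    obtain ⟨w, hwW, hw0, hsupp⟩ := hS
    obtain ⟨c, hc⟩ := (Submodule.mem_span_range_iff_exists_fun K).mp hwW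
    have hcw : ∀ j, w j = sdot c (u j) := fun j => by rw [← hc]; exact weval c j
    have hc0 : c ≠ 0 := by
      rintro rfl; apply hw0; rw [← hc]; simp
    have hZ : Submodule.span K (u '' {i | sdot c (u i) = 0}) ≤ sker c := by
      apply Submodule.span_le.mpr
      rintro _ ⟨i, hi, rfl⟩
      exact hi
    refine ⟨Submodule.span K (u '' {i | sdot c (u i) = 0}), ⟨⟨?_, _, rfl⟩, ?_⟩⟩
    · intro htop
      obtain ⟨k0, hk0⟩ : ∃ k, c k ≠ 0 := by
        by_contra hcc; push_neg at hcc; exact hc0 (funext hcc)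
      have hmem : Pi.single k0 (1 : K) ∈ sker c :=
        hZ (htop ▸ Submodule.mem_top)
      rw [mem_sker] at hmem
      apply hk0
      simpa [sdot, Pi.single_apply, mul_ite] using hmem
    · rw [← hsupp]
      ext i
      simp only [Set.mem_setOf_eq, Function.mem_support]
      constructor
      · intro hni h0
        exact hni (Submodule.subset_span ⟨i, by rw [Set.mem_setOf_eq, ← hcw]; exact h0, rfl⟩)
      · intro hwi hmem
        exact hwi (by rw [hcw]; exact hZ hmem)
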